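/- For all n ≥ 2 and all r with 1 ≤ r ≤ n−1, the counts |ℬₙ(r)| satisfy the recurrence |ℬₙ(r)| = |ℬₙ₋₁(r)|·2^r + |ℬₙ₋₁(r−1)|·(2^{n−r} − 2^{r−1}). -/

import Mathlib

open Matrix Module Submodule

namespace Stmt6

variable {m : ℕ}

/-- Extend an `m×m` matrix `A` with a new last column `v` and a zero last row. -/
def ext (A : Matrix (Fin m) (Fin m) (ZMod 2)) (v : Fin m → ZMod 2) :
    Matrix (Fin (m + 1)) (Fin (m + 1)) (ZMod 2) :=
  Fin.snoc (fun i => Fin.snoc (A i) (v i)) 0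

@[simp] lemma ext_cc (A : Matrix (Fin m) (Fin m) (ZMod 2)) (v : Fin m → ZMod 2)
    (i j : Fin m) : ext A v i.castSucc j.castSucc = A i j := by
  simp [ext]

@[simp] lemma ext_cl (A : Matrix (Fin m) (Fin m) (ZMod 2)) (v : Fin m → ZMod 2)
    (i : Fin m) : ext A v i.castSucc (Fin.last m) = v i := by
  simp [ext]

@[simp] lemma ext_l (A : Matrix (Fin m) (Fin m) (ZMod 2)) (v : Fin m → ZMod 2)
    (j : Fin (m + 1)) : ext A v (Fin.last m) j = 0 := by
  simp [ext]

lemma ext_mul (A : Matrix (Fin m) (Fin m) (ZMod 2)) (v : Fin m → ZMod 2) :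
    ext A v * ext A v = ext (A * A) (A.mulVec v) := by
  ext i j
  induction i using Fin.lastCases with
  | last => simp [Matrix.mul_apply]
  | cast i =>
    induction j using Fin.lastCases with
    | last =>
      rw [Matrix.mul_apply, Fin.sum_univ_castSucc]
      simp [Matrix.mulVec, dotProduct]
    | cast j =>
      rw [Matrix.mul_apply, Fin.sum_univ_castSucc]
      simp [Matrix.mul_apply]

lemma ext_eq_zero_iff (A : Matrix (Fin m) (Fin m) (ZMod 2)) (v : Fin m → ZMod 2) :
    ext A v = 0 ↔ A = 0 ∧ v = 0 := by
  constructor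
  · intro h
    constructor
    · ext i j; have := congrFun (congrFun h i.castSucc) j.castSucc; simpa using this
    · ext i; have := congrFun (congrFun h i.castSucc) (Fin.last m); simpa using this
  · rintro ⟨rfl, rfl⟩
    ext i j
    induction i using Fin.lastCases with
    | last => simp
    | cast i =>
      induction j using Fin.lastCases with
      | last => simp
      | cast j => simp

lemma ext_blockTriangular_iff (A : Matrix (Fin m) (Fin m) (ZMod 2)) (v : Fin m → ZMod 2) :
    (ext A v).BlockTriangular id ↔ A.BlockTriangular id := by
  constructor
  · intro h i j hij
    have := h (i := i.castSucc) (j := j.castSucc) (by simpa using hij)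
    simpa using this
  · intro h i j hij
    induction i using Fin.lastCases with
    | last => simp
    | cast i =>
      induction j using Fin.lastCases with
      | last => exact absurd hij (by simp [Fin.lt_iff_val_lt_val])
      | cast j =>
        simp only [ext_cc]
        exact h (by simpa using hij)

lemma ext_mulVec (A : Matrix (Fin m) (Fin m) (ZMod 2)) (v : Fin m → ZMod 2)
    (x : Fin (m + 1) → ZMod 2) :
    (ext A v).mulVec x =
      Fin.snoc (A.mulVec (x ∘ Fin.castSucc) + x (Fin.last m) • v) 0 := by
  ext i
  induction i using Fin.lastCases with
  | last =>
    simp [Matrix.mulVec, dotProduct]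
  | cast i =>
    rw [Matrix.mulVec, dotProduct]
    rw [Fin.sum_univ_castSucc]
    simp [Matrix.mulVec, dotProduct, mul_comm]

noncomputable def proj (m : ℕ) : (Fin (m + 1) → ZMod 2) →ₗ[ZMod 2] (Fin m → ZMod 2) :=
  LinearMap.funLeft _ _ Fin.castSucc

lemma map_proj_range (A : Matrix (Fin m) (Fin m) (ZMod 2)) (v : Fin m → ZMod 2) :
    Submodule.map (proj m) (LinearMap.range (ext A v).mulVecLin) =
      LinearMap.range A.mulVecLin ⊔ Submodule.span (ZMod 2) {v} := by
  apply le_antisymm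
  · rintro w ⟨u, ⟨x, rfl⟩, rfl⟩
    have : proj m ((ext A v).mulVecLin x) = A.mulVec (x ∘ Fin.castSucc) + x (Fin.last m) • v := by
      ext i
      simp [proj, LinearMap.funLeft, ext_mulVec]
    rw [this]
    exact add_mem (mem_sup_left ⟨x ∘ Fin.castSucc, rfl⟩)
      (mem_sup_right (smul_mem _ _ (mem_span_singleton_self v)))
  · rw [sup_le_iff]
    constructor
    · rintro w ⟨y, rfl⟩
      refine ⟨(ext A v).mulVec (Fin.snoc y 0), ⟨Fin.snoc y 0, rfl⟩, ?_⟩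
      ext i
      simp [proj, LinearMap.funLeft, ext_mulVec]
    · rw [span_le, Set.singleton_subset_iff]
      refine ⟨(ext A v).mulVec (Fin.snoc 0 1), ⟨Fin.snoc 0 1, rfl⟩, ?_⟩
      ext i
      simp [proj, LinearMap.funLeft, ext_mulVec]

lemma rank_ext (A : Matrix (Fin m) (Fin m) (ZMod 2)) (v : Fin m → ZMod 2) :
    (ext A v).rank =
      finrank (ZMod 2) ↥(LinearMap.range A.mulVecLin ⊔ Submodule.span (ZMod 2) {v}) := by
  rw [← map_proj_range, Matrix.rank]
  set P := LinearMap.range (ext A v).mulVecLin with hP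
  have hker : LinearMap.ker ((proj m).domRestrict P) = ⊥ := by
    rw [LinearMap.ker_eq_bot']
    rintro ⟨x, hx⟩ h
    obtain ⟨y, rfl⟩ := hx
    have h0 : proj m ((ext A v).mulVecLin y) = 0 := h
    ext1
    show (ext A v).mulVecLin y = 0
    have hlast : (ext A v).mulVecLin y (Fin.last m) = 0 := by
      show (ext A v).mulVec y (Fin.last m) = 0
      rw [ext_mulVec]; simp
    ext i
    induction i using Fin.lastCases with
    | last => exact hlast
    | cast i => exact congrFun h0 i
  have := LinearMap.finrank_range_add_finrank_ker ((proj m).domRestrict P)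
  rw [hker, finrank_bot, add_zero, LinearMap.range_domRestrict] at this
  rw [← this]

lemma rank_ext_mem (A : Matrix (Fin m) (Fin m) (ZMod 2)) {v : Fin m → ZMod 2}
    (hv : v ∈ LinearMap.range A.mulVecLin) : (ext A v).rank = A.rank := by
  rw [rank_ext, sup_eq_left.mpr (by rwa [span_le, Set.singleton_subset_iff])]
  rfl

lemma rank_ext_not_mem (A : Matrix (Fin m) (Fin m) (ZMod 2)) {v : Fin m → ZMod 2}
    (hv : v ∉ LinearMap.range A.mulVecLin) : (ext A v).rank = A.rank + 1 := by
  have hv0 : v ≠ 0 := fun h => hv (h ▸ zero_mem _)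
  have hdisj : Disjoint (LinearMap.range A.mulVecLin) (Submodule.span (ZMod 2) {v}) :=
    (disjoint_span_singleton' hv0).mpr hv
  have := Submodule.finrank_sup_add_finrank_inf_eq (LinearMap.range A.mulVecLin)
    (Submodule.span (ZMod 2) {v})
  rw [hdisj.eq_bot, finrank_bot, add_zero, finrank_span_singleton hv0] at this
  rw [rank_ext, this]
  rfl

noncomputable instance (k : ℕ) (p : Submodule (ZMod 2) (Fin k → ZMod 2)) : Fintype p :=
  Fintype.ofFinite p

lemma card_submodule (p : Submodule (ZMod 2) (Fin m → ZMod 2)) :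
    Nat.card p = 2 ^ finrank (ZMod 2) p := by
  rw [Nat.card_eq_fintype_card, card_eq_pow_finrank (K := ZMod 2) (V := p), ZMod.card]

lemma finrank_ker (A : Matrix (Fin m) (Fin m) (ZMod 2)) :
    finrank (ZMod 2) (LinearMap.ker A.mulVecLin) = m - A.rank := by
  have h := LinearMap.finrank_range_add_finrank_ker A.mulVecLin
  rw [Module.finrank_pi (ZMod 2)] at h
  simp only [Fintype.card_fin] at h
  have : A.rank = finrank (ZMod 2) (LinearMap.range A.mulVecLin) := rfl
  omega

lemma range_le_ker (A : Matrix (Fin m) (Fin m) (ZMod 2)) (hA : A ^ 2 = 0) :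
    LinearMap.range A.mulVecLin ≤ LinearMap.ker A.mulVecLin := by
  rintro x ⟨y, rfl⟩
  rw [LinearMap.mem_ker, ← LinearMap.comp_apply, ← Matrix.mulVecLin_mul, ← pow_two, hA]
  simp

lemma rank_le_sub (A : Matrix (Fin m) (Fin m) (ZMod 2)) (hA : A ^ 2 = 0) :
    A.rank ≤ m - A.rank := by
  rw [← finrank_ker A]
  exact Submodule.finrank_mono (range_le_ker A hA)

lemma card_fiber_mem (A : Matrix (Fin m) (Fin m) (ZMod 2)) :
    Nat.card {v : Fin m → ZMod 2 // v ∈ LinearMap.range A.mulVecLin} = 2 ^ A.rank :=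
  card_submodule _

noncomputable def orEquiv {α : Type*} (p q : α → Prop) (h : ∀ x, ¬(p x ∧ q x)) :
    {x // p x ∨ q x} ≃ {x // p x} ⊕ {x // q x} := by
  classical
  exact
  { toFun := fun x => if hp : p x.val then Sum.inl ⟨x.val, hp⟩
      else Sum.inr ⟨x.val, x.prop.resolve_left hp⟩
    invFun := fun s => s.elim (fun x => ⟨x.val, Or.inl x.prop⟩) (fun x => ⟨x.val, Or.inr x.prop⟩)
    left_inv := fun x => by by_cases hp : p x.val <;> simp [hp]
    right_inv := fun s => by
      rcases s with x | x
      · simp [x.prop]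
      · have : ¬ p x.val := fun hp => h x.val ⟨hp, x.prop⟩
        simp [this] }

lemma card_or {α : Type*} [Finite α] (p q : α → Prop) (h : ∀ x, ¬(p x ∧ q x)) :
    Nat.card {x // p x ∨ q x} = Nat.card {x // p x} + Nat.card {x // q x} := by
  rw [Nat.card_congr (orEquiv p q h), Nat.card_sum]

lemma card_fiber_not_mem (A : Matrix (Fin m) (Fin m) (ZMod 2)) (hA : A ^ 2 = 0) :
    Nat.card {v : Fin m → ZMod 2 // A.mulVec v = 0 ∧ v ∉ LinearMap.range A.mulVecLin} =
      2 ^ (m - A.rank) - 2 ^ A.rank := by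
  have hker : Nat.card {v : Fin m → ZMod 2 // A.mulVec v = 0} = 2 ^ (m - A.rank) := by
    have e : {v : Fin m → ZMod 2 // A.mulVec v = 0} ≃ LinearMap.ker A.mulVecLin :=
      Equiv.subtypeEquivRight (fun v => by simp [LinearMap.mem_ker])
    rw [Nat.card_congr e, card_submodule, finrank_ker]
  have hsplit : Nat.card {v : Fin m → ZMod 2 // A.mulVec v = 0} =
      Nat.card {v : Fin m → ZMod 2 // A.mulVec v = 0 ∧ v ∈ LinearMap.range A.mulVecLin} +
      Nat.card {v : Fin m → ZMod 2 // A.mulVec v = 0 ∧ v ∉ LinearMap.range A.mulVecLin} := by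
    rw [← card_or]
    · apply Nat.card_congr
      apply Equiv.subtypeEquivRight
      intro v
      constructor
      · intro hv
        by_cases hm : v ∈ LinearMap.range A.mulVecLin
        · exact Or.inl ⟨hv, hm⟩
        · exact Or.inr ⟨hv, hm⟩
      · rintro (⟨hv, _⟩ | ⟨hv, _⟩) <;> exact hv
    · rintro v ⟨⟨_, h1⟩, ⟨_, h2⟩⟩
      exact h2 h1
  have hmem : Nat.card {v : Fin m → ZMod 2 // A.mulVec v = 0 ∧ v ∈ LinearMap.range A.mulVecLin} =
      2 ^ A.rank := by
    have e : {v : Fin m → ZMod 2 // A.mulVec v = 0 ∧ v ∈ LinearMap.range A.mulVecLin} ≃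
        {v : Fin m → ZMod 2 // v ∈ LinearMap.range A.mulVecLin} :=
      Equiv.subtypeEquivRight (fun v => ⟨And.right,
        fun h => ⟨by simpa using range_le_ker A hA h, h⟩⟩)
    rw [Nat.card_congr e, card_fiber_mem]
  omega

def prodSigma {α β : Type*} (p : α → Prop) (q : α → β → Prop) :
    {x : α × β // p x.1 ∧ q x.1 x.2} ≃ Σ a : {a // p a}, {b // q a.val b} where
  toFun x := ⟨⟨x.val.1, x.prop.1⟩, ⟨x.val.2, x.prop.2⟩⟩
  invFun s := ⟨(s.1.val, s.2.val), s.1.prop, s.2.prop⟩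
  left_inv _ := rfl
  right_inv _ := rfl

lemma card_sigma_const {ι : Type*} [Finite ι] {f : ι → Type*} [∀ i, Finite (f i)] (c : ℕ)
    (h : ∀ i, Nat.card (f i) = c) : Nat.card (Σ i, f i) = Nat.card ι * c := by
  classical
  have : Fintype ι := Fintype.ofFinite ι
  have : ∀ i, Fintype (f i) := fun i => Fintype.ofFinite (f i)
  rw [Nat.card_eq_fintype_card, Fintype.card_sigma, Nat.card_eq_fintype_card]
  rw [Finset.sum_congr rfl (fun i _ => by rw [← Nat.card_eq_fintype_card, h i])]
  simp [Finset.sum_const, mul_comm]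

lemma zmod2_mul_self (x : ZMod 2) : x * x = x := by revert x; decide

lemma diag_zero {k : ℕ} (U : Matrix (Fin k) (Fin k) (ZMod 2))
    (hT : U.BlockTriangular id) (h2 : U ^ 2 = 0) (i : Fin k) : U i i = 0 := by
  have h : (U ^ 2) i i = 0 := by rw [h2]; rfl
  rw [pow_two, Matrix.mul_apply] at h
  rw [Finset.sum_eq_single i ?h0 (by simp)] at h
  · rwa [zmod2_mul_self] at h
  · intro j _ hj
    rcases lt_or_gt_of_ne hj with hlt | hgt
    · rw [hT (show id j < id i from hlt), zero_mul]
    · rw [hT (show id i < id j from hgt), mul_zero]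

lemma last_row (U : Matrix (Fin (m + 1)) (Fin (m + 1)) (ZMod 2))
    (hT : U.BlockTriangular id) (h2 : U ^ 2 = 0) (j : Fin (m + 1)) :
    U (Fin.last m) j = 0 := by
  rcases eq_or_lt_of_le (Fin.le_last j) with heq | hlt
  · rw [heq]; exact diag_zero U hT h2 _
  · exact hT (show id j < id (Fin.last m) from hlt)

lemma ext_sub (U : Matrix (Fin (m + 1)) (Fin (m + 1)) (ZMod 2))
    (hT : U.BlockTriangular id) (h2 : U ^ 2 = 0) :
    ext (fun i j => U i.castSucc j.castSucc) (fun i => U i.castSucc (Fin.last m)) = U := by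
  ext i j
  induction i using Fin.lastCases with
  | last => exact (ext_l _ _ j).trans (last_row U hT h2 j).symm
  | cast i =>
    induction j using Fin.lastCases with
    | last => exact ext_cl _ _ i
    | cast j => exact ext_cc _ _ i j

/-- The conditions on the smaller matrix. -/
def C (s : ℕ) (A : Matrix (Fin m) (Fin m) (ZMod 2)) : Prop :=
  A.BlockTriangular id ∧ A.rank = s ∧ A ^ 2 = 0

/-- The condition on the pair (matrix, new column). -/
def Q (r : ℕ) (p : Matrix (Fin m) (Fin m) (ZMod 2) × (Fin m → ZMod 2)) : Prop :=
  (C r p.1 ∧ p.2 ∈ LinearMap.range p.1.mulVecLin) ∨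
  (C (r - 1) p.1 ∧ (p.1.mulVec p.2 = 0 ∧ p.2 ∉ LinearMap.range p.1.mulVecLin))

lemma extract_mem {r : ℕ} {U : Matrix (Fin (m + 1)) (Fin (m + 1)) (ZMod 2)}
    (hT : U.BlockTriangular id) (hr : U.rank = r) (h2 : U ^ 2 = 0) :
    Q r ((fun i j => U i.castSucc j.castSucc), fun i => U i.castSucc (Fin.last m)) := by
  set A : Matrix (Fin m) (Fin m) (ZMod 2) := fun i j => U i.castSucc j.castSucc with hA
  set v : Fin m → ZMod 2 := fun i => U i.castSucc (Fin.last m) with hv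
  have hU : ext A v = U := ext_sub U hT h2
  have hTA : A.BlockTriangular id :=
    (ext_blockTriangular_iff A v).mp (by rw [hU]; exact hT)
  have h2' : ext (A * A) (A.mulVec v) = 0 := by rw [← ext_mul, hU, ← pow_two, h2]
  obtain ⟨hAA, hAv⟩ := (ext_eq_zero_iff _ _).mp h2'
  have hA2 : A ^ 2 = 0 := by rw [pow_two, hAA]
  by_cases hm : v ∈ LinearMap.range A.mulVecLin
  · left
    refine ⟨⟨hTA, ?_, hA2⟩, hm⟩
    rw [← hr, ← hU, rank_ext_mem A hm]
  · right
    have hro : A.rank + 1 = r := by rw [← hr, ← hU, rank_ext_not_mem A hm]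
    exact ⟨⟨hTA, by show A.rank = r - 1; omega, hA2⟩, hAv, hm⟩

lemma ext_mem {r : ℕ} (hr1 : 1 ≤ r)
    {p : Matrix (Fin m) (Fin m) (ZMod 2) × (Fin m → ZMod 2)} (hp : Q r p) :
    (ext p.1 p.2).BlockTriangular id ∧ (ext p.1 p.2).rank = r ∧ ext p.1 p.2 ^ 2 = 0 := by
  obtain ⟨A, v⟩ := p
  have h2 : ∀ (_ : A ^ 2 = 0) (_ : A.mulVec v = 0), ext A v ^ 2 = 0 := by
    intro hAA hAv
    rw [pow_two, ext_mul, hAv, show A * A = 0 from by rw [← pow_two, hAA]]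
    exact (ext_eq_zero_iff _ _).mpr ⟨rfl, rfl⟩
  rcases hp with ⟨⟨hTA, hrA, hAA⟩, hm⟩ | ⟨⟨hTA, hrA, hAA⟩, hAv, hm⟩
  · have hAv : A.mulVec v = 0 := by
      have := range_le_ker A hAA hm
      simpa using this
    exact ⟨(ext_blockTriangular_iff A v).mpr hTA,
      by rw [rank_ext_mem A hm, hrA], h2 hAA hAv⟩
  · exact ⟨(ext_blockTriangular_iff A v).mpr hTA,
      by rw [rank_ext_not_mem A hm, hrA]; omega, h2 hAA hAv⟩

noncomputable def mainEquiv (m r : ℕ) (hr1 : 1 ≤ r) :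
    {U : Matrix (Fin (m + 1)) (Fin (m + 1)) (ZMod 2) //
      U.BlockTriangular id ∧ U.rank = r ∧ U ^ 2 = 0} ≃
    {p : Matrix (Fin m) (Fin m) (ZMod 2) × (Fin m → ZMod 2) // Q r p} where
  toFun U := ⟨((fun i j => U.val i.castSucc j.castSucc),
      fun i => U.val i.castSucc (Fin.last m)),
    extract_mem U.prop.1 U.prop.2.1 U.prop.2.2⟩
  invFun p := ⟨ext p.val.1 p.val.2, ext_mem hr1 p.prop⟩
  left_inv U := Subtype.ext (ext_sub U.val U.prop.1 U.prop.2.2)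
  right_inv p := by
    apply Subtype.ext
    obtain ⟨⟨A, v⟩, hp⟩ := p
    simp only [Prod.mk.injEq]
    exact Prod.ext (by ext i j; simp) (by ext i; simp)

set_option maxHeartbeats 1000000 in
theorem key (m r : ℕ) (hr1 : 1 ≤ r) :
    Nat.card {U : Matrix (Fin (m + 1)) (Fin (m + 1)) (ZMod 2) //
        U.BlockTriangular id ∧ U.rank = r ∧ U ^ 2 = 0} =
      Nat.card {A : Matrix (Fin m) (Fin m) (ZMod 2) //
        A.BlockTriangular id ∧ A.rank = r ∧ A ^ 2 = 0} * 2 ^ r +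
      Nat.card {A : Matrix (Fin m) (Fin m) (ZMod 2) //
        A.BlockTriangular id ∧ A.rank = r - 1 ∧ A ^ 2 = 0} *
        (2 ^ (m - (r - 1)) - 2 ^ (r - 1)) := by
  rw [Nat.card_congr (mainEquiv m r hr1)]
  have hQ : ∀ p : Matrix (Fin m) (Fin m) (ZMod 2) × (Fin m → ZMod 2),
      Q r p ↔ ((fun p : Matrix (Fin m) (Fin m) (ZMod 2) × (Fin m → ZMod 2) =>
          C r p.1 ∧ p.2 ∈ LinearMap.range p.1.mulVecLin) p ∨
        ((fun p : Matrix (Fin m) (Fin m) (ZMod 2) × (Fin m → ZMod 2) =>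
          C (r - 1) p.1 ∧ (p.1.mulVec p.2 = 0 ∧ p.2 ∉ LinearMap.range p.1.mulVecLin)) p)) :=
    fun p => Iff.rfl
  rw [Nat.card_congr (Equiv.subtypeEquivRight hQ)]
  rw [card_or _ _ (by rintro p ⟨⟨_, h1⟩, ⟨_, _, h2⟩⟩; exact h2 h1)]
  rw [Nat.card_congr (prodSigma (C r) (fun A v => v ∈ LinearMap.range A.mulVecLin))]
  rw [Nat.card_congr (prodSigma (C (r - 1))
    (fun A v => A.mulVec v = 0 ∧ v ∉ LinearMap.range A.mulVecLin))]
  have hs1 := card_sigma_const (ι := {A : Matrix (Fin m) (Fin m) (ZMod 2) // C r A})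
    (f := fun a => {v : Fin m → ZMod 2 // v ∈ LinearMap.range a.val.mulVecLin}) (2 ^ r)
    (fun a => (card_fiber_mem a.val).trans (by rw [a.prop.2.1]))
  have hs2 := card_sigma_const (ι := {A : Matrix (Fin m) (Fin m) (ZMod 2) // C (r - 1) A})
    (f := fun a => {v : Fin m → ZMod 2 //
      a.val.mulVec v = 0 ∧ v ∉ LinearMap.range a.val.mulVecLin})
    (2 ^ (m - (r - 1)) - 2 ^ (r - 1))
    (fun a => (card_fiber_not_mem a.val a.prop.2.2).trans (by rw [a.prop.2.1]))
  rw [hs1, hs2]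
  rfl

end Stmt6

open Stmt6 in
/-- For all `n ≥ 2` and `1 ≤ r ≤ n − 1`,
`|ℬₙ(r)| = |ℬₙ₋₁(r)|·2^r + |ℬₙ₋₁(r−1)|·(2^{n−r} − 2^{r−1})` (as integers). -/
theorem stmt_6 (n r : ℕ) (hn : 2 ≤ n) (hr1 : 1 ≤ r) (hr2 : r ≤ n - 1) :
    (Nat.card {U : Matrix (Fin n) (Fin n) (ZMod 2) //
        U.BlockTriangular id ∧ U.rank = r ∧ U ^ 2 = 0} : ℤ) =
      (Nat.card {U : Matrix (Fin (n - 1)) (Fin (n - 1)) (ZMod 2) //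
        U.BlockTriangular id ∧ U.rank = r ∧ U ^ 2 = 0} : ℤ) * 2 ^ r +
      (Nat.card {U : Matrix (Fin (n - 1)) (Fin (n - 1)) (ZMod 2) //
        U.BlockTriangular id ∧ U.rank = r - 1 ∧ U ^ 2 = 0} : ℤ) *
        ((2 : ℤ) ^ (n - r) - 2 ^ (r - 1)) := by
  obtain ⟨m, rfl⟩ : ∃ m, n = m + 1 := ⟨n - 1, by omega⟩
  have hkey := key m r hr1
  have hexp : m + 1 - r = m - (r - 1) := by omega
  show ((Nat.card {U : Matrix (Fin (m + 1)) (Fin (m + 1)) (ZMod 2) //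
        U.BlockTriangular id ∧ U.rank = r ∧ U ^ 2 = 0} : ℕ) : ℤ) =
      (Nat.card {U : Matrix (Fin m) (Fin m) (ZMod 2) //
        U.BlockTriangular id ∧ U.rank = r ∧ U ^ 2 = 0} : ℤ) * 2 ^ r +
      (Nat.card {U : Matrix (Fin m) (Fin m) (ZMod 2) //
        U.BlockTriangular id ∧ U.rank = r - 1 ∧ U ^ 2 = 0} : ℤ) *
        ((2 : ℤ) ^ (m + 1 - r) - 2 ^ (r - 1))
  rw [hkey, hexp]
  by_cases hE : Nonempty {A : Matrix (Fin m) (Fin m) (ZMod 2) //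
      A.BlockTriangular id ∧ A.rank = r - 1 ∧ A ^ 2 = 0}
  · obtain ⟨A⟩ := hE
    have hle : 2 ^ (r - 1) ≤ 2 ^ (m - (r - 1)) := by
      apply Nat.pow_le_pow_right (by norm_num)
      have := rank_le_sub A.val A.prop.2.2
      rw [A.prop.2.1] at this
      exact this
    push_cast [Nat.cast_sub hle]
    ring
  · have h0 : Nat.card {A : Matrix (Fin m) (Fin m) (ZMod 2) //
        A.BlockTriangular id ∧ A.rank = r - 1 ∧ A ^ 2 = 0} = 0 :=
by
      have : IsEmpty {A : Matrix (Fin m) (Fin m) (ZMod 2) //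
          A.BlockTriangular id ∧ A.rank = r - 1 ∧ A ^ 2 = 0} := not_nonempty_iff.mp hE
      exact Nat.card_of_isEmpty
    rw [h0]
    push_cast
    ring
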